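/- For every natural number n ≥ 2 and real x with |x| ≠ 1 and all denominators nonzero, ∑_{l=1}^{n-1} 1/(1 − 2x·cos(πl/n) + x²) = n(x^{2n} + 1)/((x² − 1)(x^{2n} − 1)) − (x² + 1)/(x² − 1)². -/

import Mathlib

open Real Finset

lemma ee_ne_one (n k : ℕ) (hn : 0 < n) (h1 : 0 < k) (h2 : k < 2 * n) :
    Complex.exp ((k : ℂ) * ((Real.pi : ℂ) / n) * Complex.I) ≠ 1 := by
  rw [Ne, Complex.exp_eq_one_iff]
  rintro ⟨m, hm⟩
  have hn' : (n : ℂ) ≠ 0 := Nat.cast_ne_zero.2 hn.ne'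
  field_simp at hm
  have hne : (Real.pi : ℂ) * Complex.I ≠ 0 :=
    mul_ne_zero (by exact_mod_cast Real.pi_ne_zero) Complex.I_ne_zero
  have hk : (k : ℂ) = (m : ℂ) * 2 * n := by linear_combination hm
  have hkz : (k : ℤ) = m * 2 * n := by exact_mod_cast hk
  have hnz : (0 : ℤ) < n := by exact_mod_cast hn
  have hkz1 : (0 : ℤ) < k := by exact_mod_cast h1
  have hkz2 : (k : ℤ) < 2 * n := by exact_mod_cast h2
  rcases le_or_gt m 0 with h | h
  · nlinarith
  · nlinarith

noncomputable def zz (n : ℕ) : ℂ := Complex.exp ((Real.pi : ℂ) / n * Complex.I)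

lemma zz_pow (n k : ℕ) : zz n ^ k = Complex.exp ((k : ℂ) * ((Real.pi : ℂ) / n) * Complex.I) := by
  rw [zz, ← Complex.exp_nat_mul]; ring_nf

lemma zz_pow_ne_one (n k : ℕ) (hn : 0 < n) (h1 : 0 < k) (h2 : k < 2 * n) : zz n ^ k ≠ 1 := by
  rw [zz_pow]; exact ee_ne_one n k hn h1 h2

lemma zz_pow_two_n (n : ℕ) (hn : 0 < n) : zz n ^ (2 * n) = 1 := by
  rw [zz_pow]
  have hn' : (n : ℂ) ≠ 0 := Nat.cast_ne_zero.2 hn.ne'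
  have : ((2 * n : ℕ) : ℂ) * ((Real.pi : ℂ) / n) * Complex.I = 2 * Real.pi * Complex.I := by
    push_cast; field_simp
  rw [this, Complex.exp_two_pi_mul_I]

lemma zz_abs (n k : ℕ) : ‖zz n ^ k‖ = 1 := by
  rw [norm_pow, zz]
  have : (Real.pi : ℂ) / n * Complex.I = ((Real.pi / n : ℝ) : ℂ) * Complex.I := by push_cast; ring
  rw [this, Complex.norm_exp_ofReal_mul_I, one_pow]

lemma sub_zz_ne (n k : ℕ) (x : ℝ) (hx : |x| ≠ 1) : (x : ℂ) - zz n ^ k ≠ 0 := by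
  rw [sub_ne_zero]
  intro h
  apply hx
  have := congrArg norm h
  rwa [Complex.norm_real, Real.norm_eq_abs, zz_abs] at this

lemma abs_pow_ne_one (n : ℕ) (hn : 0 < n) (x : ℝ) (hx : |x| ≠ 1) : x ^ (2 * n) ≠ 1 := by
  intro h
  apply hx
  have h' : |x| ^ (2 * n) = 1 := by
    rw [← abs_pow, h, abs_one]
  rcases lt_trichotomy |x| 1 with hlt | he | hgt
  · have := pow_lt_one₀ (abs_nonneg x) hlt (by omega : 2 * n ≠ 0); linarith
  · exact he
  · have := one_lt_pow₀ hgt (by omega : 2 * n ≠ 0); linarith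

lemma xpow_sub_one_ne (n : ℕ) (hn : 0 < n) (x : ℝ) (hx : |x| ≠ 1) :
    (x : ℂ) ^ (2 * n) - 1 ≠ 0 := by
  rw [sub_ne_zero]
  intro h
  exact abs_pow_ne_one n hn x hx (by exact_mod_cast h)

lemma sum_inv_linear (n : ℕ) (hn : 0 < n) (x : ℝ) (hx : |x| ≠ 1) :
    ∑ k ∈ range (2 * n), 1 / ((x : ℂ) - zz n ^ k) =
      2 * n * (x : ℂ) ^ (2 * n - 1) / ((x : ℂ) ^ (2 * n) - 1) := by
  have hX := xpow_sub_one_ne n hn x hx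
  have key : ∀ k, 1 / ((x : ℂ) - zz n ^ k) =
      (∑ j ∈ range (2 * n), (x : ℂ) ^ j * (zz n ^ k) ^ (2 * n - 1 - j)) / ((x : ℂ) ^ (2 * n) - 1) := by
    intro k
    rw [div_eq_div_iff (sub_zz_ne n k x hx) hX, one_mul]
    have hg := geom_sum₂_mul (x : ℂ) (zz n ^ k) (2 * n)
    have h1 : (zz n ^ k) ^ (2 * n) = 1 := by
      rw [pow_right_comm, zz_pow_two_n n hn, one_pow]
    rw [h1] at hg
    exact hg.symm
  simp only [key, ← Finset.sum_div]
  congr 1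
  rw [Finset.sum_comm]
  have inner : ∀ j ∈ range (2 * n), ∑ k ∈ range (2 * n), (x : ℂ) ^ j * (zz n ^ k) ^ (2 * n - 1 - j)
      = if j = 2 * n - 1 then 2 * n * (x : ℂ) ^ (2 * n - 1) else 0 := by
    intro j hj
    simp only [mem_range] at hj
    rw [← Finset.mul_sum]
    have hrw : ∀ k : ℕ, (zz n ^ k) ^ (2 * n - 1 - j) = (zz n ^ (2 * n - 1 - j)) ^ k := by
      intro k; rw [← pow_mul, ← pow_mul, mul_comm]
    simp only [hrw]
    by_cases hj' : j = 2 * n - 1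
    · subst hj'
      simp only [if_pos rfl, Nat.sub_self, pow_zero, one_pow]
      rw [Finset.sum_const, card_range]
      push_cast; ring
    · rw [if_neg hj']
      have h1 : 0 < 2 * n - 1 - j := by omega
      have h2 : 2 * n - 1 - j < 2 * n := by omega
      rw [geom_sum_eq (zz_pow_ne_one n _ hn h1 h2)]
      have h3 : (zz n ^ (2 * n - 1 - j)) ^ (2 * n) = 1 := by
        rw [pow_right_comm, zz_pow_two_n n hn, one_pow]
      rw [h3]
      simp
  rw [Finset.sum_congr rfl inner, Finset.sum_ite_eq' (range (2*n)) (2*n-1)]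
  rw [if_pos (by simp only [mem_range]; omega)]

lemma zz_pow_eq_exp (n k : ℕ) (hn : 0 < n) :
    zz n ^ k = Complex.exp (((Real.pi * k / n : ℝ) : ℂ) * Complex.I) := by
  rw [zz_pow]
  congr 1
  push_cast
  ring

lemma zz_pow_reflect (n k : ℕ) (hn : 0 < n) (hk : k ≤ 2 * n) :
    zz n ^ (2 * n - k) = Complex.exp ((-(Real.pi * k / n : ℝ) : ℂ) * Complex.I) := by
  rw [zz_pow]
  have hn' : (n : ℂ) ≠ 0 := Nat.cast_ne_zero.2 hn.ne'
  have hc : ((2 * n - k : ℕ) : ℂ) = 2 * n - k := by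
    push_cast [Nat.cast_sub hk]; ring
  rw [hc]
  have : (2 * (n : ℂ) - k) * ((Real.pi : ℂ) / n) * Complex.I =
      2 * Real.pi * Complex.I + (-(Real.pi * k / n : ℝ) : ℂ) * Complex.I := by
    push_cast; field_simp; ring
  rw [this, Complex.exp_add, Complex.exp_two_pi_mul_I, one_mul]

lemma pair_eq (n k : ℕ) (hn : 0 < n) (hk1 : 1 ≤ k) (hk2 : k < n) (x : ℝ) (hx : |x| ≠ 1) :
    ((2 * x - 2 * Real.cos (Real.pi * k / n) : ℝ) : ℂ) /
        ((1 - 2 * x * Real.cos (Real.pi * k / n) + x ^ 2 : ℝ) : ℂ) =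
      1 / ((x : ℂ) - zz n ^ k) + 1 / ((x : ℂ) - zz n ^ (2 * n - k)) := by
  set θ : ℝ := Real.pi * k / n with hθ
  set a : ℂ := zz n ^ k with ha
  set b : ℂ := zz n ^ (2 * n - k) with hb
  have hxa : (x : ℂ) - a ≠ 0 := sub_zz_ne n k x hx
  have hxb : (x : ℂ) - b ≠ 0 := sub_zz_ne n (2 * n - k) x hx
  have hae : a = Complex.exp ((θ : ℂ) * Complex.I) := zz_pow_eq_exp n k hn
  have hbe : b = Complex.exp (-(θ : ℂ) * Complex.I) := by
    have h := zz_pow_reflect n k hn (by omega)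
    rw [hθ]
    push_cast at h ⊢
    exact h
  have hsum : a + b = 2 * Complex.cos (θ : ℂ) := by
    rw [hae, hbe, Complex.exp_mul_I, Complex.exp_mul_I]
    simp [Complex.cos_neg, Complex.sin_neg]
    ring
  have hab : a * b = 1 := by
    rw [hae, hbe, ← Complex.exp_add]
    push_cast
    ring_nf
    exact Complex.exp_zero
  have hDa : ((1 - 2 * x * Real.cos θ + x ^ 2 : ℝ) : ℂ) = ((x : ℂ) - a) * ((x : ℂ) - b) := by
    push_cast
    linear_combination (x : ℂ) * hsum - hab
  rw [hDa]
  have hsplit : 1 / ((x:ℂ) - a) + 1 / ((x:ℂ) - b) =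
      (((x:ℂ) - b) + ((x:ℂ) - a)) / (((x:ℂ) - a) * ((x:ℂ) - b)) := by
    rw [div_add_div _ _ hxa hxb, one_mul, mul_one]
  rw [hsplit, div_eq_div_iff (mul_ne_zero hxa hxb) (mul_ne_zero hxa hxb)]
  push_cast
  linear_combination (((x:ℂ) - a) * ((x:ℂ) - b)) * hsum

lemma zz_pow_n (n : ℕ) (hn : 0 < n) : zz n ^ n = -1 := by
  rw [zz_pow_eq_exp n n hn]
  have hn' : (n : ℝ) ≠ 0 := Nat.cast_ne_zero.2 hn.ne'
  rw [show (Real.pi * n / n : ℝ) = Real.pi by field_simp]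
  exact_mod_cast Complex.exp_pi_mul_I

lemma real_S2 (n : ℕ) (hn : 2 ≤ n) (x : ℝ) (hx : |x| ≠ 1) :
    ∑ k ∈ Finset.Ico 1 n, (2 * x - 2 * Real.cos (π * k / n)) / (1 - 2 * x * Real.cos (π * k / n) + x ^ 2) =
      2 * n * x ^ (2 * n - 1) / (x ^ (2 * n) - 1) - 1 / (x - 1) - 1 / (x + 1) := by
  have hn0 : 0 < n := by omega
  set f : ℕ → ℂ := fun k => 1 / ((x : ℂ) - zz n ^ k) with hf
  have hsplit : ∑ k ∈ range (2 * n), f k =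
      f 0 + ∑ k ∈ Finset.Ico 1 n, f k + (f n + ∑ k ∈ Finset.Ico 1 n, f (2 * n - k)) := by
    rw [Finset.range_eq_Ico, ← Finset.sum_Ico_consecutive f (by omega : 0 ≤ n) (by omega : n ≤ 2 * n)]
    congr 1
    · rw [Finset.sum_eq_sum_Ico_succ_bot (by omega : 0 < n) f]
    · rw [Finset.sum_eq_sum_Ico_succ_bot (by omega : n < 2 * n) f]
      congr 1
      refine Finset.sum_nbij' (fun k => 2 * n - k) (fun k => 2 * n - k) ?_ ?_ ?_ ?_ ?_
      · intro a ha; simp only [mem_Ico] at ha ⊢; omega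
      · intro a ha; simp only [mem_Ico] at ha ⊢; omega
      · intro a ha; simp only [mem_Ico] at ha; omega
      · intro a ha; simp only [mem_Ico] at ha; omega
      · intro a ha
        simp only [mem_Ico] at ha
        rw [show 2 * n - (2 * n - a) = a by omega]
  have hf0 : f 0 = 1 / ((x : ℂ) - 1) := by rw [hf]; simp
  have hfn : f n = 1 / ((x : ℂ) + 1) := by rw [hf]; simp [zz_pow_n n hn0, sub_neg_eq_add]
  have hC : ∑ k ∈ Finset.Ico 1 n,
      (((2 * x - 2 * Real.cos (π * k / n)) / (1 - 2 * x * Real.cos (π * k / n) + x ^ 2) : ℝ) : ℂ) =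
      2 * n * (x : ℂ) ^ (2 * n - 1) / ((x : ℂ) ^ (2 * n) - 1) - 1 / ((x : ℂ) - 1) - 1 / ((x : ℂ) + 1) := by
    have h1 : ∀ k ∈ Finset.Ico 1 n,
        (((2 * x - 2 * Real.cos (π * k / n)) / (1 - 2 * x * Real.cos (π * k / n) + x ^ 2) : ℝ) : ℂ)
          = f k + f (2 * n - k) := by
      intro k hk
      simp only [mem_Ico] at hk
      rw [Complex.ofReal_div]
      exact pair_eq n k hn0 hk.1 hk.2 x hx
    rw [Finset.sum_congr rfl h1, Finset.sum_add_distrib]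
    have h2 := sum_inv_linear n hn0 x hx
    rw [hsplit, hf0, hfn] at h2
    linear_combination h2
  apply Complex.ofReal_injective
  push_cast
  push_cast at hC
  linear_combination hC

theorem rational_cos_sum_half (n : ℕ) (hn : 2 ≤ n) (x : ℝ) (hx : |x| ≠ 1) :
    ∑ l ∈ Finset.Ico 1 n, 1 / (1 - 2 * x * Real.cos (π * l / n) + x ^ 2) =
      n * (x ^ (2 * n) + 1) / ((x ^ 2 - 1) * (x ^ (2 * n) - 1)) -
        (x ^ 2 + 1) / (x ^ 2 - 1) ^ 2 := by
  have hn0 : 0 < n := by omega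
  have hD : ∀ k : ℕ, 1 ≤ k → k < n → 0 < 1 - 2 * x * Real.cos (π * k / n) + x ^ 2 := by
    intro k h1 h2
    have hk0 : (0 : ℝ) < k := by exact_mod_cast h1
    have hn0' : (0 : ℝ) < n := by exact_mod_cast hn0
    have hθ1 : 0 < π * k / n := by positivity
    have hθ2 : π * k / n < π := by
      rw [div_lt_iff₀ hn0']
      have hkn : (k : ℝ) < n := by exact_mod_cast h2
      nlinarith [Real.pi_pos]
    have hs : 0 < Real.sin (π * k / n) := Real.sin_pos_of_pos_of_lt_pi hθ1 hθ2
    nlinarith [Real.sin_sq_add_cos_sq (π * k / n), sq_nonneg (x - Real.cos (π * k / n))]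
  by_cases hx0 : x = 0
  · subst hx0
    have hterm : ∀ k ∈ Finset.Ico 1 n,
        1 / (1 - 2 * (0:ℝ) * Real.cos (π * k / n) + (0:ℝ) ^ 2) = 1 := by
      intro k _; norm_num
    rw [Finset.sum_congr rfl hterm, Finset.sum_const, Nat.card_Ico, nsmul_eq_mul, mul_one]
    rw [zero_pow (by omega : 2 * n ≠ 0)]
    push_cast [Nat.cast_sub (by omega : 1 ≤ n)]
    norm_num
  · have hxne1 : x ≠ 1 := fun h => hx (by rw [h]; simp)
    have hxnem1 : x ≠ -1 := fun h => hx (by rw [h]; simp)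
    have hx1 : x - 1 ≠ 0 := sub_ne_zero.2 hxne1
    have hxp1 : x + 1 ≠ 0 := fun h => hxnem1 (by linarith)
    have hx2 : x ^ 2 - 1 ≠ 0 := by
      intro h
      rcases mul_eq_zero.1 (show (x - 1) * (x + 1) = 0 by nlinarith) with h' | h'
      · exact hx1 h'
      · exact hxp1 h'
    have hX : x ^ (2 * n) - 1 ≠ 0 := sub_ne_zero.2 (abs_pow_ne_one n hn0 x hx)
    have hterm : ∀ k ∈ Finset.Ico 1 n,
        1 / (1 - 2 * x * Real.cos (π * k / n) + x ^ 2) =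
          (x * ((2 * x - 2 * Real.cos (π * k / n)) / (1 - 2 * x * Real.cos (π * k / n) + x ^ 2)) - 1)
            / (x ^ 2 - 1) := by
      intro k hk
      simp only [mem_Ico] at hk
      have hDk := (hD k hk.1 hk.2).ne'
      field_simp
      ring
    rw [Finset.sum_congr rfl hterm, ← Finset.sum_div, Finset.sum_sub_distrib, ← Finset.mul_sum,
      real_S2 n hn x hx, Finset.sum_const, Nat.card_Ico, nsmul_eq_mul, mul_one]
    have hcast : ((n - 1 : ℕ) : ℝ) = (n : ℝ) - 1 := by
      push_cast [Nat.cast_sub (by omega : 1 ≤ n)]; ring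
    rw [hcast]
    obtain ⟨m, hm⟩ : ∃ m, 2 * n = m + 1 := ⟨2 * n - 1, by omega⟩
    rw [show 2 * n - 1 = m by omega, hm, pow_succ]
    rw [hm, pow_succ] at hX
    have hX' : x * x ^ m - 1 ≠ 0 := by rwa [mul_comm]
    field_simp
    ring
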